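/- Let X be a metric measure space with a doubling measure, positive finite on balls, and let 0 < s < ∞, 0 < p, q ≤ ∞. The Hajłasz–Besov space N^s_{p,q}(X) is complete with respect to its (quasi)norm; i.e., every Cauchy sequence in N^s_{p,q}(X) converges in N^s_{p,q}(X). -/

import Mathlib

open MeasureTheory Metric

/-- `g` is a fractional `s`-gradient of `u`. -/
def IsFracGrad {X : Type*} [MetricSpace X] [MeasurableSpace X] (μ : Measure X)
    (s : ℝ) (u : X → ℝ) (g : ℤ → X → ℝ) : Prop :=
  (∀ k x, 0 ≤ g k x) ∧ (∀ k, Measurable (g k)) ∧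
    ∃ E : Set X, μ E = 0 ∧ ∀ k : ℤ, ∀ x ∉ E, ∀ y ∉ E,
      (2 : ℝ) ^ (-k - 1) ≤ dist x y → dist x y < (2 : ℝ) ^ (-k) →
      |u x - u y| ≤ dist x y ^ s * (g k x + g k y)

/-- The mixed `ℓ^q(L^p)` norm of a sequence of functions. -/
noncomputable def lqLpNorm {X : Type*} [MeasurableSpace X] (μ : Measure X)
    (p q : ENNReal) (g : ℤ → X → ℝ) : ENNReal :=
  if q = ⊤ then ⨆ k : ℤ, eLpNorm (g k) p μ
  else (∑' k : ℤ, (eLpNorm (g k) p μ) ^ q.toReal) ^ (1 / q.toReal)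

/-- The Hajłasz--Besov (quasi)norm. -/
noncomputable def besovNorm {X : Type*} [MetricSpace X] [MeasurableSpace X] (μ : Measure X)
    (s : ℝ) (p q : ENNReal) (u : X → ℝ) : ENNReal :=
  eLpNorm u p μ + ⨅ (g : ℤ → X → ℝ) (_ : IsFracGrad μ s u g), lqLpNorm μ p q g

open Filter

namespace BesovAux

lemma rpow_iSup {ι : Sort*} (a : ι → ENNReal) {r : ℝ} (hr : 0 < r) :
    (⨆ i, a i) ^ r = ⨆ i, a i ^ r := by
  refine le_antisymm ?_ (iSup_le fun i => ENNReal.rpow_le_rpow (le_iSup a i) hr.le)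
  have h1 : ∀ i, a i ≤ (⨆ j, a j ^ r) ^ (1 / r) := by
    intro i
    have : a i = (a i ^ r) ^ (1 / r) := by
      rw [← ENNReal.rpow_mul, mul_one_div_cancel hr.ne', ENNReal.rpow_one]
    rw [this]
    exact ENNReal.rpow_le_rpow (le_iSup (fun j => a j ^ r) i) (by positivity)
  calc (⨆ i, a i) ^ r ≤ (((⨆ j, a j ^ r) ^ (1 / r)) : ENNReal) ^ r :=
        ENNReal.rpow_le_rpow (iSup_le h1) hr.le
    _ = ⨆ j, a j ^ r := by
        rw [← ENNReal.rpow_mul, one_div_mul_cancel hr.ne', ENNReal.rpow_one]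

lemma tsum_rpow_le {ι : Type*} (b : ι → ENNReal) {r : ℝ} (h0 : 0 < r) (h1 : r ≤ 1) :
    (∑' i, b i) ^ r ≤ ∑' i, b i ^ r := by
  rw [ENNReal.tsum_eq_iSup_sum, rpow_iSup _ h0]
  refine iSup_le fun s => ?_
  have : (∑ i ∈ s, b i) ^ r ≤ ∑ i ∈ s, b i ^ r := by
    classical
    induction s using Finset.cons_induction with
    | empty => simp [ENNReal.zero_rpow_of_pos h0]
    | cons i s his ih =>
        rw [Finset.sum_cons, Finset.sum_cons]
        exact (ENNReal.rpow_add_le_add_rpow _ _ h0.le h1).trans (add_le_add le_rfl ih)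
  exact this.trans (ENNReal.sum_le_tsum s)

lemma mink_tsum {Y : Type*} [MeasurableSpace Y] (ν : Measure Y) {t : ℝ} (ht : 1 ≤ t)
    (φ : ℕ → Y → ENNReal) (hφ : ∀ i, Measurable (φ i)) :
    (∫⁻ y, (∑' i, φ i y) ^ t ∂ν) ^ (1 / t) ≤
      ∑' i, (∫⁻ y, (φ i y) ^ t ∂ν) ^ (1 / t) := by
  have ht0 : (0:ℝ) < t := lt_of_lt_of_le one_pos ht
  have hmeas : ∀ N, Measurable fun y => ∑ i ∈ Finset.range N, φ i y :=
    fun N => Finset.measurable_sum _ fun i _ => hφ i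
  have fin : ∀ N, (∫⁻ y, (∑ i ∈ Finset.range N, φ i y) ^ t ∂ν) ^ (1 / t) ≤
      ∑ i ∈ Finset.range N, (∫⁻ y, (φ i y) ^ t ∂ν) ^ (1 / t) := by
    intro N
    induction N with
    | zero =>
        simp only [Finset.range_zero, Finset.sum_empty]
        rw [ENNReal.zero_rpow_of_pos ht0, lintegral_zero,
          ENNReal.zero_rpow_of_pos (by positivity : (0:ℝ) < 1/t)]
    | succ N ih =>
        have : (∫⁻ y, ((∑ i ∈ Finset.range N, φ i y) + φ N y) ^ t ∂ν) ^ (1 / t) ≤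
            (∫⁻ y, (∑ i ∈ Finset.range N, φ i y) ^ t ∂ν) ^ (1 / t)
              + (∫⁻ y, (φ N y) ^ t ∂ν) ^ (1 / t) :=
          ENNReal.lintegral_Lp_add_le (hmeas N).aemeasurable (hφ N).aemeasurable ht
        simp only [Finset.sum_range_succ]
        exact this.trans (add_le_add ih le_rfl)
  have hpt : ∀ y, (∑' i, φ i y) ^ t = ⨆ N, (∑ i ∈ Finset.range N, φ i y) ^ t := by
    intro y
    rw [ENNReal.tsum_eq_iSup_nat, rpow_iSup _ ht0]
  have hmono : Monotone fun N => fun y => (∑ i ∈ Finset.range N, φ i y) ^ t := by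
    intro N M hNM y
    exact ENNReal.rpow_le_rpow (Finset.sum_le_sum_of_subset
      (Finset.range_subset_range.mpr hNM)) ht0.le
  have : ∫⁻ y, (∑' i, φ i y) ^ t ∂ν = ⨆ N, ∫⁻ y, (∑ i ∈ Finset.range N, φ i y) ^ t ∂ν := by
    simp_rw [hpt]
    exact lintegral_iSup (fun N => (ENNReal.continuous_rpow_const.measurable).comp (hmeas N))
      hmono
  rw [this, rpow_iSup _ (by positivity : (0:ℝ) < 1/t)]
  refine iSup_le fun N => (fin N).trans ?_
  exact ENNReal.sum_le_tsum _

variable {X : Type*} [MeasurableSpace X]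

/-- `L^t` norm of an `ℝ≥0∞`-valued function. -/
noncomputable def eN (μ : Measure X) (t : ENNReal) (φ : X → ENNReal) : ENNReal :=
  if t = ⊤ then essSup φ μ else (∫⁻ x, φ x ^ t.toReal ∂μ) ^ (1 / t.toReal)

lemma eN_mono_ae {μ : Measure X} {t : ENNReal} {φ ψ : X → ENNReal}
    (h : ∀ᵐ x ∂μ, φ x ≤ ψ x) : eN μ t φ ≤ eN μ t ψ := by
  unfold eN
  split
  · exact essSup_mono_ae h
  · exact ENNReal.rpow_le_rpow
      (lintegral_mono_ae (h.mono fun x hx => ENNReal.rpow_le_rpow hx ENNReal.toReal_nonneg))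
      (by positivity)

lemma eN_zero {μ : Measure X} {t : ENNReal} (ht : t ≠ 0) :
    eN μ t (fun _ => 0) = 0 := by
  unfold eN
  split
  · rw [show (0:ENNReal) = ⊥ from rfl]
    exact essSup_const_bot
  · rename_i htop
    have htr : 0 < t.toReal := ENNReal.toReal_pos ht htop
    simp_rw [ENNReal.zero_rpow_of_pos htr, lintegral_zero,
      ENNReal.zero_rpow_of_pos (show (0:ℝ) < 1/t.toReal by positivity)]

lemma eN_lt_top_ae {μ : Measure X} {t : ENNReal} {φ : X → ENNReal}
    (ht : t ≠ 0) (hφ : Measurable φ) (h : eN μ t φ ≠ ⊤) :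
    ∀ᵐ x ∂μ, φ x < ⊤ := by
  unfold eN at h
  by_cases htop : t = ⊤
  · rw [if_pos htop] at h
    filter_upwards [ENNReal.ae_le_essSup φ] with x hx
    exact lt_of_le_of_lt hx h.lt_top
  · rw [if_neg htop] at h
    have htr : 0 < t.toReal := ENNReal.toReal_pos ht htop
    have hint : ∫⁻ x, φ x ^ t.toReal ∂μ ≠ ⊤ := by
      intro hc
      rw [hc, ENNReal.top_rpow_of_pos (by positivity : (0:ℝ) < 1/t.toReal)] at h
      exact h rfl
    filter_upwards [ae_lt_top (ENNReal.continuous_rpow_const.measurable.comp hφ) hint] with x hx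
    exact (ENNReal.rpow_lt_top_iff_of_pos htr).mp hx

lemma eN_tsum_rpow_le {μ : Measure X} {t : ENNReal} (ht : t ≠ 0) {ρ : ℝ}
    (hρ0 : 0 < ρ) (hρ1 : ρ ≤ 1) (hρt : ENNReal.ofReal ρ ≤ t)
    (φ : ℕ → X → ENNReal) (hφ : ∀ i, Measurable (φ i)) :
    eN μ t (fun x => ∑' i, φ i x) ^ ρ ≤ ∑' i, eN μ t (φ i) ^ ρ := by
  by_cases h1t : 1 ≤ t
  · -- Minkowski regime: first-power subadditivity
    have hmain : eN μ t (fun x => ∑' i, φ i x) ≤ ∑' i, eN μ t (φ i) := by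
      unfold eN
      split
      · -- essSup
        have hae : ∀ᵐ x ∂μ, ∀ i, φ i x ≤ essSup (φ i) μ :=
          (ae_all_iff).mpr fun i => ENNReal.ae_le_essSup (φ i)
        refine essSup_le_of_ae_le _ ?_
        filter_upwards [hae] with x hx
        exact ENNReal.tsum_le_tsum fun i => hx i
      · rename_i htop
        have htr : 1 ≤ t.toReal := by
          have := ENNReal.toReal_mono htop h1t
          simpa using this
        exact mink_tsum μ htr φ hφ
    calc eN μ t (fun x => ∑' i, φ i x) ^ ρ ≤ (∑' i, eN μ t (φ i)) ^ ρ :=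
          ENNReal.rpow_le_rpow hmain hρ0.le
      _ ≤ ∑' i, eN μ t (φ i) ^ ρ := tsum_rpow_le _ hρ0 hρ1
  · -- t < 1, subadditivity of rpow
    push_neg at h1t
    have htop : t ≠ ⊤ := by
      intro hc; rw [hc] at h1t; exact (not_le.mpr h1t) le_top
    have htr : 0 < t.toReal := ENNReal.toReal_pos ht htop
    have htr1 : t.toReal ≤ 1 := by
      have := ENNReal.toReal_mono (by simp : (1:ENNReal) ≠ ⊤) h1t.le
      simpa using this
    have hρtr : ρ ≤ t.toReal := (ENNReal.ofReal_le_iff_le_toReal htop).mp hρt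
    unfold eN
    simp only [if_neg htop]
    have hpt : ∀ x, (∑' i, φ i x) ^ t.toReal ≤ ∑' i, (φ i x) ^ t.toReal :=
      fun x => tsum_rpow_le _ htr htr1
    have hint : ∫⁻ x, (∑' i, φ i x) ^ t.toReal ∂μ ≤ ∑' i, ∫⁻ x, (φ i x) ^ t.toReal ∂μ := by
      calc ∫⁻ x, (∑' i, φ i x) ^ t.toReal ∂μ
          ≤ ∫⁻ x, ∑' i, (φ i x) ^ t.toReal ∂μ := lintegral_mono hpt
        _ = ∑' i, ∫⁻ x, (φ i x) ^ t.toReal ∂μ :=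
            lintegral_tsum fun i =>
              (ENNReal.continuous_rpow_const.measurable.comp (hφ i)).aemeasurable
    set c : ℕ → ENNReal := fun i => ∫⁻ x, (φ i x) ^ t.toReal ∂μ with hc
    have hρτ : 0 < ρ / t.toReal := by positivity
    have hρτ1 : ρ / t.toReal ≤ 1 := by
      rw [div_le_one htr]; exact hρtr
    calc ((∫⁻ x, (∑' i, φ i x) ^ t.toReal ∂μ) ^ (1 / t.toReal)) ^ ρ
        = (∫⁻ x, (∑' i, φ i x) ^ t.toReal ∂μ) ^ (ρ / t.toReal) := by
          rw [← ENNReal.rpow_mul]; congr 1; field_simp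
      _ ≤ (∑' i, c i) ^ (ρ / t.toReal) := ENNReal.rpow_le_rpow hint hρτ.le
      _ ≤ ∑' i, (c i) ^ (ρ / t.toReal) := tsum_rpow_le _ hρτ hρτ1
      _ = ∑' i, ((c i) ^ (1 / t.toReal)) ^ ρ := by
          congr 1; funext i; rw [← ENNReal.rpow_mul]; congr 1; field_simp


/-- Mixed `ℓ^q(L^p)` norm of an `ℝ≥0∞`-valued gradient sequence. -/
noncomputable def Qn (μ : Measure X) (p q : ENNReal) (Γ : ℤ → X → ENNReal) : ENNReal :=
  if q = ⊤ then ⨆ k, eN μ p (Γ k) else (∑' k, eN μ p (Γ k) ^ q.toReal) ^ (1 / q.toReal)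

lemma eN_le_Qn {μ : Measure X} {p q : ENNReal} (hq : q ≠ 0) (Γ : ℤ → X → ENNReal) (k : ℤ) :
    eN μ p (Γ k) ≤ Qn μ p q Γ := by
  unfold Qn
  split
  · exact le_iSup (fun k => eN μ p (Γ k)) k
  · rename_i htop
    have hqr : 0 < q.toReal := ENNReal.toReal_pos hq htop
    have : eN μ p (Γ k) = ((eN μ p (Γ k)) ^ q.toReal) ^ (1/q.toReal) := by
      rw [← ENNReal.rpow_mul, mul_one_div_cancel hqr.ne', ENNReal.rpow_one]
    rw [this]
    exact ENNReal.rpow_le_rpow (ENNReal.le_tsum k) (by positivity)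

lemma Qn_mono_ae {μ : Measure X} {p q : ENNReal} {Γ Δ : ℤ → X → ENNReal}
    (h : ∀ k, ∀ᵐ x ∂μ, Γ k x ≤ Δ k x) : Qn μ p q Γ ≤ Qn μ p q Δ := by
  unfold Qn
  split
  · exact iSup_mono fun k => eN_mono_ae (h k)
  · exact ENNReal.rpow_le_rpow (ENNReal.tsum_le_tsum fun k =>
      ENNReal.rpow_le_rpow (eN_mono_ae (h k)) ENNReal.toReal_nonneg) (by positivity)

lemma Qn_tsum_rpow_le {μ : Measure X} {p q : ENNReal} (hp : p ≠ 0) (hq : q ≠ 0) {ρ : ℝ}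
    (hρ0 : 0 < ρ) (hρ1 : ρ ≤ 1) (hρp : ENNReal.ofReal ρ ≤ p) (hρq : ENNReal.ofReal ρ ≤ q)
    (Γ : ℕ → ℤ → X → ENNReal) (hΓ : ∀ i k, Measurable (Γ i k)) :
    Qn μ p q (fun k x => ∑' i, Γ i k x) ^ ρ ≤ ∑' i, Qn μ p q (Γ i) ^ ρ := by
  have hkey : ∀ k, eN μ p (fun x => ∑' i, Γ i k x) ^ ρ ≤ ∑' i, eN μ p (Γ i k) ^ ρ :=
    fun k => eN_tsum_rpow_le hp hρ0 hρ1 hρp (fun i => Γ i k) (fun i => hΓ i k)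
  unfold Qn
  split
  · -- q = ⊤
    rw [rpow_iSup _ hρ0]
    refine iSup_le fun k => (hkey k).trans ?_
    refine ENNReal.tsum_le_tsum fun i => ?_
    rw [rpow_iSup (fun k => eN μ p (Γ i k)) hρ0]
    exact le_iSup (fun k => eN μ p (Γ i k) ^ ρ) k
  · rename_i htop
    have hqr : 0 < q.toReal := ENNReal.toReal_pos hq htop
    have hρq' : ρ ≤ q.toReal := (ENNReal.ofReal_le_iff_le_toReal htop).mp hρq
    set τ : ℝ := q.toReal / ρ with hτ
    have hτ1 : 1 ≤ τ := by rw [hτ, le_div_iff₀ hρ0]; simpa using hρq'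
    have hτ0 : (0:ℝ) < τ := lt_of_lt_of_le one_pos hτ1
    set c : ℕ → ℤ → ENNReal := fun i k => eN μ p (Γ i k) ^ ρ with hcdef
    have hmink := mink_tsum (Measure.count : Measure ℤ) hτ1 (fun i k => c i k)
      (fun i => measurable_of_countable _)
    simp_rw [lintegral_count] at hmink
    have hτρ : ∀ a : ENNReal, (a ^ ρ) ^ τ = a ^ q.toReal := by
      intro a
      rw [← ENNReal.rpow_mul]; congr 1; rw [hτ]; field_simp
    have hinvτ : 1 / τ = ρ / q.toReal := by
      rw [hτ]; field_simp
    calc ((∑' k, eN μ p (fun x => ∑' i, Γ i k x) ^ q.toReal) ^ (1 / q.toReal)) ^ ρ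
        = (∑' k, eN μ p (fun x => ∑' i, Γ i k x) ^ q.toReal) ^ (ρ / q.toReal) := by
          rw [← ENNReal.rpow_mul]; congr 1; field_simp
      _ ≤ (∑' k : ℤ, (∑' i, c i k) ^ τ) ^ (ρ / q.toReal) := by
          refine ENNReal.rpow_le_rpow (ENNReal.tsum_le_tsum fun k => ?_) (by positivity)
          rw [← hτρ (eN μ p (fun x => ∑' i, Γ i k x))]
          exact ENNReal.rpow_le_rpow (hkey k) hτ0.le
      _ = (∑' k : ℤ, (∑' i, c i k) ^ τ) ^ (1 / τ) := by rw [hinvτ]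
      _ ≤ ∑' i, (∑' k : ℤ, (c i k) ^ τ) ^ (1 / τ) := hmink
      _ = ∑' i, ((∑' k, eN μ p (Γ i k) ^ q.toReal) ^ (1 / q.toReal)) ^ ρ := by
          congr 1; funext i
          simp_rw [hcdef, hτρ]
          rw [← ENNReal.rpow_mul, hinvτ]
          congr 1; field_simp
lemma Qn_zero {μ : Measure X} {p q : ENNReal} (hp : p ≠ 0) (hq : q ≠ 0) :
    Qn μ p q (fun _ _ => (0:ENNReal)) = 0 := by
  unfold Qn
  split
  · simp [eN_zero hp]
  · rename_i htop
    have hqr : 0 < q.toReal := ENNReal.toReal_pos hq htop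
    simp_rw [eN_zero hp, ENNReal.zero_rpow_of_pos hqr, tsum_zero,
      ENNReal.zero_rpow_of_pos (show (0:ℝ) < 1/q.toReal by positivity)]


lemma tsum_ite2 (a b : ENNReal) :
    (∑' i : ℕ, if i = 0 then a else if i = 1 then b else 0) = a + b := by
  classical
  rw [tsum_eq_sum (s := ({0,1} : Finset ℕ)) (fun i hi => by
    simp only [Finset.mem_insert, Finset.mem_singleton] at hi
    push_neg at hi
    rw [if_neg hi.1, if_neg hi.2])]
  rw [Finset.sum_pair (by norm_num : (0:ℕ) ≠ 1)]
  simp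

lemma eN_add_rpow_le {μ : Measure X} {t : ENNReal} (ht : t ≠ 0) {ρ : ℝ}
    (hρ0 : 0 < ρ) (hρ1 : ρ ≤ 1) (hρt : ENNReal.ofReal ρ ≤ t)
    {φ ψ : X → ENNReal} (hφ : Measurable φ) (hψ : Measurable ψ) :
    eN μ t (fun x => φ x + ψ x) ^ ρ ≤ eN μ t φ ^ ρ + eN μ t ψ ^ ρ := by
  classical
  set Φ : ℕ → X → ENNReal := fun i x => if i = 0 then φ x else if i = 1 then ψ x else 0 with hΦ
  have hm : ∀ i, Measurable (Φ i) := by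
    intro i
    by_cases h0 : i = 0
    · subst h0; simpa [hΦ] using hφ
    · by_cases h1 : i = 1
      · subst h1; simpa [hΦ] using hψ
      · simp only [hΦ, if_neg h0, if_neg h1]; exact measurable_const
  have h1 : (fun x => φ x + ψ x) = fun x => ∑' i, Φ i x := by
    funext x; rw [tsum_ite2]
  have h2 := eN_tsum_rpow_le (μ := μ) ht hρ0 hρ1 hρt Φ hm
  rw [h1]
  refine h2.trans ?_
  have h3 : ∀ i, eN μ t (Φ i) ^ ρ =
      if i = 0 then eN μ t φ ^ ρ else if i = 1 then eN μ t ψ ^ ρ else 0 := by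
    intro i
    by_cases h0 : i = 0
    · subst h0; simp only [if_pos rfl]; congr 1
    · by_cases hone : i = 1
      · subst hone; simp only [hΦ]; norm_num
      · simp only [hΦ, if_neg h0, if_neg hone]
        rw [eN_zero ht, ENNReal.zero_rpow_of_pos hρ0]
  rw [tsum_congr h3, tsum_ite2]

lemma Qn_add_rpow_le {μ : Measure X} {p q : ENNReal} (hp : p ≠ 0) (hq : q ≠ 0) {ρ : ℝ}
    (hρ0 : 0 < ρ) (hρ1 : ρ ≤ 1) (hρp : ENNReal.ofReal ρ ≤ p) (hρq : ENNReal.ofReal ρ ≤ q)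
    {Γ Δ : ℤ → X → ENNReal} (hΓ : ∀ k, Measurable (Γ k)) (hΔ : ∀ k, Measurable (Δ k)) :
    Qn μ p q (fun k x => Γ k x + Δ k x) ^ ρ ≤ Qn μ p q Γ ^ ρ + Qn μ p q Δ ^ ρ := by
  classical
  set Φ : ℕ → ℤ → X → ENNReal :=
    fun i k x => if i = 0 then Γ k x else if i = 1 then Δ k x else 0 with hΦ
  have hm : ∀ i k, Measurable (Φ i k) := by
    intro i k
    by_cases h0 : i = 0
    · subst h0; simpa [hΦ] using hΓ k
    · by_cases h1 : i = 1
      · subst h1; simpa [hΦ] using hΔ k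
      · simp only [hΦ, if_neg h0, if_neg h1]; exact measurable_const
  have h1 : (fun k x => Γ k x + Δ k x) = fun k x => ∑' i, Φ i k x := by
    funext k x; rw [tsum_ite2]
  have h2 := Qn_tsum_rpow_le (μ := μ) hp hq hρ0 hρ1 hρp hρq Φ hm
  rw [h1]
  refine h2.trans ?_
  have h3 : ∀ i, Qn μ p q (Φ i) ^ ρ =
      if i = 0 then Qn μ p q Γ ^ ρ else if i = 1 then Qn μ p q Δ ^ ρ else 0 := by
    intro i
    by_cases h0 : i = 0
    · subst h0; simp only [if_pos rfl]; congr 1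
    · by_cases hone : i = 1
      · subst hone; simp only [hΦ]; norm_num
      · simp only [hΦ, if_neg h0, if_neg hone]
        rw [Qn_zero hp hq, ENNReal.zero_rpow_of_pos hρ0]
  rw [tsum_congr h3, tsum_ite2]

lemma eLpNorm_eq_eN {μ : Measure X} {p : ENNReal} (hp : p ≠ 0) (f : X → ℝ) :
    eLpNorm f p μ = eN μ p (fun x => ENNReal.ofReal |f x|) := by
  have hpt : ∀ x : X, ENNReal.ofReal |f x| = ‖f x‖ₑ := by
    intro x
    rw [← Real.norm_eq_abs, ofReal_norm]
  by_cases htop : p = ⊤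
  · subst htop
    rw [eLpNorm_exponent_top, eLpNormEssSup]
    unfold eN
    rw [if_pos rfl]
    congr 1; funext x; rw [hpt]
  · rw [eLpNorm_eq_lintegral_rpow_enorm_toReal hp htop]
    unfold eN
    rw [if_neg htop]
    congr 1
    refine lintegral_congr fun x => ?_
    simp only []
    rw [hpt]

lemma lqLpNorm_eq_Qn {μ : Measure X} {p q : ENNReal} (hp : p ≠ 0)
    (g : ℤ → X → ℝ) (hg : ∀ k x, 0 ≤ g k x) :
    lqLpNorm μ p q g = Qn μ p q (fun k x => ENNReal.ofReal (g k x)) := by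
  have hk : ∀ k, eLpNorm (g k) p μ = eN μ p (fun x => ENNReal.ofReal (g k x)) := by
    intro k
    rw [eLpNorm_eq_eN hp]
    congr 1; funext x; rw [abs_of_nonneg (hg k x)]
  unfold lqLpNorm Qn
  simp_rw [hk]

lemma isFracGrad_sub {Y : Type*} [MetricSpace Y] [MeasurableSpace Y] {μ : Measure Y}
    {s : ℝ} {u w : Y → ℝ} {g h : ℤ → Y → ℝ}
    (hg : IsFracGrad μ s u g) (hh : IsFracGrad μ s w h) :
    IsFracGrad μ s (fun x => u x - w x) (fun k x => g k x + h k x) := by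
  obtain ⟨hg0, hgm, E1, hE1, hE1'⟩ := hg
  obtain ⟨hh0, hhm, E2, hE2, hE2'⟩ := hh
  refine ⟨fun k x => add_nonneg (hg0 k x) (hh0 k x), fun k => (hgm k).add (hhm k),
    E1 ∪ E2, measure_union_null hE1 hE2, ?_⟩
  intro k x hx y hy hd1 hd2
  have hx1 : x ∉ E1 := fun h' => hx (Set.mem_union_left _ h')
  have hx2 : x ∉ E2 := fun h' => hx (Set.mem_union_right _ h')
  have hy1 : y ∉ E1 := fun h' => hy (Set.mem_union_left _ h')
  have hy2 : y ∉ E2 := fun h' => hy (Set.mem_union_right _ h')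
  have h1 := hE1' k x hx1 y hy1 hd1 hd2
  have h2 := hE2' k x hx2 y hy2 hd1 hd2
  have habs : |u x - w x - (u y - w y)| ≤ |u x - u y| + |w x - w y| := by
    have : u x - w x - (u y - w y) = (u x - u y) - (w x - w y) := by ring
    rw [this]
    exact (abs_sub _ _)
  calc |u x - w x - (u y - w y)| ≤ |u x - u y| + |w x - w y| := habs
    _ ≤ dist x y ^ s * (g k x + g k y) + dist x y ^ s * (h k x + h k y) :=
        add_le_add h1 h2
    _ = dist x y ^ s * (g k x + h k x + (g k y + h k y)) := by ring

end BesovAux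

set_option maxHeartbeats 2000000 in
open BesovAux in
theorem besov_complete {X : Type*} [MetricSpace X] [MeasurableSpace X] [BorelSpace X]
    (μ : Measure X)
    (hpos : ∀ (x : X) (r : ℝ), 0 < r → 0 < μ (ball x r))
    (hfin : ∀ (x : X) (r : ℝ), 0 < r → μ (ball x r) < ⊤)
    (cD : ℝ) (hcD : 0 < cD)
    (hdoubling : ∀ (x : X) (r : ℝ), 0 < r →
      μ (ball x (2 * r)) ≤ ENNReal.ofReal cD * μ (ball x r))
    (s : ℝ) (hs : 0 < s) (p q : ENNReal) (hp : 0 < p) (hq : 0 < q)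
    (u : ℕ → X → ℝ) (humeas : ∀ n, Measurable (u n))
    (hufin : ∀ n, besovNorm μ s p q (u n) < ⊤)
    (hcauchy : ∀ ε : ENNReal, 0 < ε → ∃ N : ℕ, ∀ m ≥ N, ∀ n ≥ N,
      besovNorm μ s p q (fun x => u m x - u n x) < ε) :
    ∃ v : X → ℝ, Measurable v ∧ besovNorm μ s p q v < ⊤ ∧
      Filter.Tendsto (fun n => besovNorm μ s p q (fun x => u n x - v x))
        Filter.atTop (nhds 0) := by
  classical
  have hp0 : p ≠ 0 := hp.ne'
  have hq0 : q ≠ 0 := hq.ne'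
  -- the exponent ρ
  set ρe : ENNReal := min 1 (min p q) with hρe
  have hρe0 : ρe ≠ 0 := (lt_min one_pos (lt_min hp hq)).ne'
  have hρetop : ρe ≠ ⊤ := ne_top_of_le_ne_top ENNReal.one_ne_top (min_le_left _ _)
  set ρ : ℝ := ρe.toReal with hρdef
  have hρ0 : 0 < ρ := ENNReal.toReal_pos hρe0 hρetop
  have hρ1 : ρ ≤ 1 := by
    have := ENNReal.toReal_mono ENNReal.one_ne_top (min_le_left 1 (min p q))
    simpa using this
  have hofρ : ENNReal.ofReal ρ = ρe := ENNReal.ofReal_toReal hρetop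
  have hρp : ENNReal.ofReal ρ ≤ p := by
    rw [hofρ]; exact (min_le_right _ _).trans (min_le_left _ _)
  have hρq : ENNReal.ofReal ρ ≤ q := by
    rw [hofρ]; exact (min_le_right _ _).trans (min_le_right _ _)
  -- geometric quantities
  set tg : ENNReal := (2⁻¹ : ENNReal) ^ ρ with htg
  have htglt : tg < 1 := by
    rw [htg]
    exact ENNReal.rpow_lt_one (by norm_num) hρ0
  set S : ENNReal := ∑' i : ℕ, tg ^ i with hS
  have hSne : S ≠ ⊤ := by
    rw [hS, ENNReal.tsum_geometric]
    exact ENNReal.inv_ne_top.mpr (tsub_pos_of_lt htglt).ne'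
  have hpow : ∀ i : ℕ, ((2⁻¹ : ENNReal) ^ i) ^ ρ = tg ^ i := by
    intro i
    rw [← ENNReal.rpow_natCast (2⁻¹ : ENNReal) i, ← ENNReal.rpow_natCast tg i, htg,
      ← ENNReal.rpow_mul, ← ENNReal.rpow_mul]
    congr 1; ring
  have h1Sne : (1 : ENNReal) + S ≠ ⊤ := by
    simp [ENNReal.add_ne_top, hSne]
  set B : ℕ → ENNReal := fun M => (tg ^ M * (1 + S)) ^ (1/ρ) with hBdef
  have hBne : ∀ M, B M ≠ ⊤ := by
    intro M
    rw [hBdef]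
    refine ENNReal.rpow_ne_top_of_nonneg (by positivity) ?_
    have htgne : tg ≠ ⊤ := by
      rw [htg]
      exact ENNReal.rpow_ne_top_of_nonneg hρ0.le (by norm_num)
    exact ENNReal.mul_ne_top (ENNReal.pow_ne_top htgne) h1Sne
  -- extraction of gradients from finite Besov norm
  have hextract : ∀ (f : X → ℝ) (C : ENNReal), besovNorm μ s p q f < C →
      eLpNorm f p μ < C ∧ ∃ g, IsFracGrad μ s f g ∧ lqLpNorm μ p q g < C := by
    intro f C hC
    unfold besovNorm at hC
    constructor
    · exact lt_of_le_of_lt le_self_add hC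
    · have h2 : (⨅ (g : ℤ → X → ℝ) (_ : IsFracGrad μ s f g), lqLpNorm μ p q g) < C :=
        lt_of_le_of_lt le_add_self hC
      rw [iInf_lt_iff] at h2
      obtain ⟨g, hg⟩ := h2
      rw [iInf_lt_iff] at hg
      obtain ⟨hg1, hg2⟩ := hg
      exact ⟨g, hg1, hg2⟩
  -- Cauchy subsequence
  have hhalfpos : ∀ i : ℕ, (0:ENNReal) < 2⁻¹ ^ i :=
    fun i => ENNReal.pow_pos (ENNReal.inv_pos.mpr (by norm_num)) i
  choose N hN using fun i : ℕ => hcauchy (2⁻¹ ^ i) (hhalfpos i)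
  set n : ℕ → ℕ := fun i => Nat.rec (N 0) (fun i ih => max (ih + 1) (N (i + 1))) i with hn
  have hnsucc : ∀ i, n (i + 1) = max (n i + 1) (N (i + 1)) := fun i => rfl
  have hn_ge : ∀ i, N i ≤ n i := by
    intro i
    cases i with
    | zero => exact le_rfl
    | succ j => rw [hnsucc]; exact le_max_right _ _
  have hn_lt : ∀ i, n i < n (i+1) := by
    intro i; rw [hnsucc]; exact lt_of_lt_of_le (Nat.lt_succ_self _) (le_max_left _ _)
  have hn_mono : Monotone n := monotone_nat_of_le_succ fun i => (hn_lt i).le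
  have hcau : ∀ i, ∀ m, n i ≤ m → ∀ m', n i ≤ m' →
      besovNorm μ s p q (fun x => u m x - u m' x) < 2⁻¹ ^ i :=
    fun i m hm m' hm' => hN i m (le_trans (hn_ge i) hm) m' (le_trans (hn_ge i) hm')
  -- differences
  set h : ℕ → X → ℝ := fun i x => u (n (i+1)) x - u (n i) x with hh
  have hmeas_h : ∀ i, Measurable (h i) := fun i => (humeas _).sub (humeas _)
  have hbesov_h : ∀ i, besovNorm μ s p q (h i) < 2⁻¹ ^ i :=
    fun i => hcau i (n (i+1)) (hn_lt i).le (n i) le_rfl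
  have heLp_h : ∀ i, eLpNorm (h i) p μ < 2⁻¹ ^ i := fun i => (hextract _ _ (hbesov_h i)).1
  choose g hg hglt using fun i => (hextract _ _ (hbesov_h i)).2
  -- a.e. absolute summability
  set Hsum : X → ENNReal := fun x => ∑' i, ENNReal.ofReal |h i x| with hHsum
  have hHmeas : Measurable Hsum :=
    Measurable.ennreal_tsum fun i => ENNReal.measurable_ofReal.comp (hmeas_h i).abs
  have hHfin : eN μ p Hsum ≠ ⊤ := by
    have h1 : eN μ p Hsum ^ ρ ≤ ∑' i, eN μ p (fun x => ENNReal.ofReal |h i x|) ^ ρ :=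
      eN_tsum_rpow_le (μ := μ) hp0 hρ0 hρ1 hρp _
        (fun i => ENNReal.measurable_ofReal.comp (hmeas_h i).abs)
    have h2 : ∑' i, eN μ p (fun x => ENNReal.ofReal |h i x|) ^ ρ ≤ S := by
      rw [hS]
      refine ENNReal.tsum_le_tsum fun i => ?_
      rw [← hpow i]
      refine ENNReal.rpow_le_rpow ?_ hρ0.le
      rw [← eLpNorm_eq_eN hp0]
      exact (heLp_h i).le
    intro hc
    rw [hc, ENNReal.top_rpow_of_pos hρ0] at h1
    exact hSne (top_le_iff.mp (h1.trans h2))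
  have hHae : ∀ᵐ x ∂μ, Hsum x < ⊤ := eN_lt_top_ae hp0 hHmeas hHfin
  have hsummable : ∀ x, Hsum x ≠ ⊤ → Summable fun i => h i x := by
    intro x hx
    have h1 : Summable fun i => |h i x| := by
      have h2 := ENNReal.summable_toReal hx
      refine h2.congr fun i => ?_
      rw [ENNReal.toReal_ofReal (abs_nonneg _)]
    exact h1.of_abs
  have htel : ∀ (x : X) (M : ℕ), ∑ i ∈ Finset.range M, h i x = u (n M) x - u (n 0) x := by
    intro x M
    exact Finset.sum_range_sub (f := fun i => u (n i) x) M
  have hconv : ∀ᵐ x ∂μ, ∃ l, Filter.Tendsto (fun M => u (n M) x) Filter.atTop (nhds l) := by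
    filter_upwards [hHae] with x hx
    have hsx := hsummable x hx.ne
    refine ⟨u (n 0) x + ∑' i, h i x, ?_⟩
    have h1 := hsx.hasSum.tendsto_sum_nat
    have h2 := h1.const_add (u (n 0) x)
    refine h2.congr fun M => ?_
    rw [htel x M]; ring
  obtain ⟨v, hvmeas, hvtend⟩ := measurable_limit_of_tendsto_metrizable_ae
    (fun M => (humeas (n M)).aemeasurable) hconv
  -- tail representation
  have hrep : ∀ x, Hsum x ≠ ⊤ →
      Filter.Tendsto (fun M => u (n M) x) Filter.atTop (nhds (v x)) →
      ∀ M, HasSum (fun i => h (M + i) x) (v x - u (n M) x) := by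
    intro x hx htd M
    have hsx := hsummable x hx
    have hsM : Summable fun i => h (M + i) x := by
      refine ((summable_nat_add_iff M).mpr hsx).congr fun i => ?_
      rw [add_comm]
    have hps : Filter.Tendsto (fun K => ∑ i ∈ Finset.range K, h (M + i) x)
        Filter.atTop (nhds (v x - u (n M) x)) := by
      have h1 : ∀ K, ∑ i ∈ Finset.range K, h (M + i) x = u (n (M + K)) x - u (n M) x := by
        intro K
        exact Finset.sum_range_sub (f := fun i => u (n (M + i)) x) K
      have h2 : Filter.Tendsto (fun K => u (n (M + K)) x) Filter.atTop (nhds (v x)) := by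
        have h3 : Filter.Tendsto (fun K : ℕ => M + K) Filter.atTop Filter.atTop := by
          simpa [add_comm] using Filter.tendsto_add_atTop_nat M
        exact htd.comp h3
      have h4 := h2.sub_const (u (n M) x)
      refine h4.congr fun K => ?_
      rw [h1]
    have h5 : ∑' i, h (M + i) x = v x - u (n M) x :=
      tendsto_nhds_unique hsM.hasSum.tendsto_sum_nat hps
    exact h5 ▸ hsM.hasSum
  -- the key quantitative approximation step
  have key : ∀ (M : ℕ) (m : ℕ), n M ≤ m →
      eLpNorm (fun x => u m x - v x) p μ ≤ B M ∧
      ∃ G, IsFracGrad μ s (fun x => u m x - v x) G ∧ lqLpNorm μ p q G ≤ B M := by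
    intro M m hm
    have hstep := hcau M m hm (n M) le_rfl
    have hLp' := (hextract _ _ hstep).1
    obtain ⟨g', hg', hg'lt⟩ := (hextract _ _ hstep).2
    -- tail geometric computation
    have htail : ∑' i : ℕ, ((2⁻¹ : ENNReal) ^ (M + i)) ^ ρ = tg ^ M * S := by
      rw [hS]
      rw [← ENNReal.tsum_mul_left]
      congr 1; funext i
      rw [hpow (M + i), pow_add]
    -- (a) the Lp part
    have hψmeas : Measurable fun x => ∑' i, ENNReal.ofReal |h (M + i) x| :=
      Measurable.ennreal_tsum fun i => ENNReal.measurable_ofReal.comp (hmeas_h (M + i)).abs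
    have haept : ∀ᵐ x ∂μ, ENNReal.ofReal |u m x - v x| ≤
        ENNReal.ofReal |u m x - u (n M) x| + ∑' i, ENNReal.ofReal |h (M + i) x| := by
      filter_upwards [hHae, hvtend] with x hx htd
      have hrep' := hrep x hx.ne htd M
      have habs : Summable fun i => |h (M + i) x| := by
        have h2 := (hsummable x hx.ne)
        have h3 : Summable fun i => h (M + i) x := by
          refine ((summable_nat_add_iff M).mpr h2).congr fun i => ?_
          rw [add_comm]
        exact h3.abs
      have h1 : |u m x - v x| ≤ |u m x - u (n M) x| + |v x - u (n M) x| := by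
        have he : u m x - v x = (u m x - u (n M) x) - (v x - u (n M) x) := by ring
        rw [he]; exact abs_sub _ _
      have h2 : |v x - u (n M) x| ≤ ∑' i, |h (M + i) x| := by
        rw [← hrep'.tsum_eq]
        simpa using norm_tsum_le_tsum_norm (f := fun i => h (M + i) x)
          (by simpa using habs)
      calc ENNReal.ofReal |u m x - v x|
          ≤ ENNReal.ofReal (|u m x - u (n M) x| + ∑' i, |h (M + i) x|) :=
            ENNReal.ofReal_le_ofReal (h1.trans (add_le_add le_rfl h2))
        _ = ENNReal.ofReal |u m x - u (n M) x| + ENNReal.ofReal (∑' i, |h (M + i) x|) :=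
            ENNReal.ofReal_add (abs_nonneg _) (tsum_nonneg fun i => abs_nonneg _)
        _ = ENNReal.ofReal |u m x - u (n M) x| + ∑' i, ENNReal.ofReal |h (M + i) x| := by
            rw [ENNReal.ofReal_tsum_of_nonneg (fun i => abs_nonneg _) habs]
    have hrpow_le : ∀ a c : ENNReal, a ^ ρ ≤ c → a ≤ c ^ (1/ρ) := by
      intro a c hac
      have := ENNReal.rpow_le_rpow hac (show (0:ℝ) ≤ 1/ρ by positivity)
      rwa [← ENNReal.rpow_mul, mul_one_div_cancel hρ0.ne', ENNReal.rpow_one] at this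
    have haLp : eLpNorm (fun x => u m x - v x) p μ ≤ B M := by
      rw [eLpNorm_eq_eN hp0, hBdef]
      refine hrpow_le _ _ ?_
      calc eN μ p (fun x => ENNReal.ofReal |u m x - v x|) ^ ρ
          ≤ eN μ p (fun x => ENNReal.ofReal |u m x - u (n M) x|
              + ∑' i, ENNReal.ofReal |h (M + i) x|) ^ ρ :=
            ENNReal.rpow_le_rpow (eN_mono_ae haept) hρ0.le
        _ ≤ eN μ p (fun x => ENNReal.ofReal |u m x - u (n M) x|) ^ ρ
              + eN μ p (fun x => ∑' i, ENNReal.ofReal |h (M + i) x|) ^ ρ :=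
            eN_add_rpow_le hp0 hρ0 hρ1 hρp
              (ENNReal.measurable_ofReal.comp ((humeas m).sub (humeas (n M))).abs) hψmeas
        _ ≤ tg ^ M + tg ^ M * S := by
            refine add_le_add ?_ ?_
            · rw [← hpow M]
              refine ENNReal.rpow_le_rpow ?_ hρ0.le
              rw [← eLpNorm_eq_eN hp0]
              exact hLp'.le
            · rw [← htail]
              refine le_trans (eN_tsum_rpow_le (μ := μ) hp0 hρ0 hρ1 hρp _
                (fun i => ENNReal.measurable_ofReal.comp (hmeas_h (M + i)).abs)) ?_
              refine ENNReal.tsum_le_tsum fun i => ?_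
              refine ENNReal.rpow_le_rpow ?_ hρ0.le
              rw [← eLpNorm_eq_eN hp0]
              exact (heLp_h (M + i)).le
        _ = tg ^ M * (1 + S) := by ring
    -- (b) the gradient part
    set Δ : ℤ → X → ENNReal := fun k x =>
      ENNReal.ofReal (g' k x) + ∑' i, ENNReal.ofReal (g (M + i) k x) with hΔdef
    have hΔmeas : ∀ k, Measurable (Δ k) := by
      intro k
      exact (ENNReal.measurable_ofReal.comp (hg'.2.1 k)).add
        (Measurable.ennreal_tsum fun i => ENNReal.measurable_ofReal.comp ((hg (M + i)).2.1 k))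
    have hQΔρ : Qn μ p q Δ ^ ρ ≤ tg ^ M * (1 + S) := by
      calc Qn μ p q Δ ^ ρ
          ≤ Qn μ p q (fun k x => ENNReal.ofReal (g' k x)) ^ ρ
            + Qn μ p q (fun k x => ∑' i, ENNReal.ofReal (g (M + i) k x)) ^ ρ :=
            Qn_add_rpow_le hp0 hq0 hρ0 hρ1 hρp hρq
              (fun k => ENNReal.measurable_ofReal.comp (hg'.2.1 k))
              (fun k => Measurable.ennreal_tsum fun i =>
                ENNReal.measurable_ofReal.comp ((hg (M + i)).2.1 k))
        _ ≤ tg ^ M + tg ^ M * S := by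
            refine add_le_add ?_ ?_
            · rw [← hpow M]
              refine ENNReal.rpow_le_rpow ?_ hρ0.le
              rw [← lqLpNorm_eq_Qn hp0 g' hg'.1]
              exact hg'lt.le
            · rw [← htail]
              refine le_trans (Qn_tsum_rpow_le (μ := μ) hp0 hq0 hρ0 hρ1 hρp hρq
                (fun i k x => ENNReal.ofReal (g (M + i) k x))
                (fun i k => ENNReal.measurable_ofReal.comp ((hg (M + i)).2.1 k))) ?_
              refine ENNReal.tsum_le_tsum fun i => ?_
              refine ENNReal.rpow_le_rpow ?_ hρ0.le
              rw [← lqLpNorm_eq_Qn hp0 _ (hg (M + i)).1]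
              exact (hglt (M + i)).le
        _ = tg ^ M * (1 + S) := by ring
    have hQΔ : Qn μ p q Δ ≤ B M := by rw [hBdef]; exact hrpow_le _ _ hQΔρ
    have hΔfin : ∀ k, ∀ᵐ x ∂μ, Δ k x < ⊤ := by
      intro k
      refine eN_lt_top_ae hp0 (hΔmeas k) ?_
      intro hc
      have := (eN_le_Qn (μ := μ) (p := p) hq0 Δ k).trans hQΔ
      rw [hc, top_le_iff] at this
      exact hBne M this
    set G : ℤ → X → ℝ := fun k x => (Δ k x).toReal with hGdef
    refine ⟨haLp, G, ?_, ?_⟩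
    · -- IsFracGrad
      obtain ⟨hg'0, hg'm, E1, hE10, hE1'⟩ := hg'
      have hgi : ∀ i, (∀ k x, 0 ≤ g i k x) ∧ (∀ k, Measurable (g i k)) := fun i => ⟨(hg i).1, (hg i).2.1⟩
      choose E2 hE20 hE2' using fun i => (hg i).2.2
      set Ebad : Set X := {x | Hsum x = ⊤}
        ∪ {x | ¬ Filter.Tendsto (fun M => u (n M) x) Filter.atTop (nhds (v x))}
        ∪ (⋃ k : ℤ, {x | Δ k x = ⊤}) ∪ E1 ∪ (⋃ i, E2 i) with hEbad
      have hEbad0 : μ Ebad = 0 := by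
        rw [hEbad]
        refine measure_union_null (measure_union_null (measure_union_null
          (measure_union_null ?_ ?_) ?_) hE10) ?_
        · have := hHae
          rw [MeasureTheory.ae_iff] at this
          convert this using 2
          ext x; simp [lt_top_iff_ne_top]
        · have := hvtend
          rw [MeasureTheory.ae_iff] at this
          exact this
        · refine measure_iUnion_null fun k => ?_
          have := hΔfin k
          rw [MeasureTheory.ae_iff] at this
          convert this using 2
          ext x; simp [lt_top_iff_ne_top]
        · exact measure_iUnion_null hE20
      refine ⟨fun k x => ENNReal.toReal_nonneg,
        fun k => ENNReal.measurable_toReal.comp (hΔmeas k), Ebad, hEbad0, ?_⟩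
      intro k x hx y hy hd1 hd2
      rw [hEbad] at hx hy
      simp only [Set.mem_union, Set.mem_setOf_eq, Set.mem_iUnion, not_or, not_exists,
        not_not] at hx hy
      obtain ⟨⟨⟨⟨hxH, hxT⟩, hxΔ⟩, hxE1⟩, hxE2⟩ := hx
      obtain ⟨⟨⟨⟨hyH, hyT⟩, hyΔ⟩, hyE1⟩, hyE2⟩ := hy
      -- summabilities of gradient tails
      have hsgx : Summable fun i => g (M + i) k x := by
        have h1 : (∑' i, ENNReal.ofReal (g (M + i) k x)) ≠ ⊤ := by
          intro hc
          apply hxΔ k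
          rw [hΔdef]
          simp only
          rw [hc]; simp
        have h2 := ENNReal.summable_toReal h1
        refine h2.congr fun i => ?_
        rw [ENNReal.toReal_ofReal ((hgi (M + i)).1 k x)]
      have hsgy : Summable fun i => g (M + i) k y := by
        have h1 : (∑' i, ENNReal.ofReal (g (M + i) k y)) ≠ ⊤ := by
          intro hc
          apply hyΔ k
          rw [hΔdef]
          simp only
          rw [hc]; simp
        have h2 := ENNReal.summable_toReal h1
        refine h2.congr fun i => ?_
        rw [ENNReal.toReal_ofReal ((hgi (M + i)).1 k y)]
      -- pointwise gradient bound on differences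
      have hbound : ∀ i, |h (M + i) x - h (M + i) y| ≤
          dist x y ^ s * (g (M + i) k x + g (M + i) k y) :=
        fun i => hE2' (M + i) k x (hxE2 (M + i)) y (hyE2 (M + i)) hd1 hd2
      have hsbound : Summable fun i =>
          dist x y ^ s * (g (M + i) k x + g (M + i) k y) :=
        (hsgx.add hsgy).mul_left _
      have hsa : Summable fun i => h (M + i) x - h (M + i) y := by
        refine Summable.of_abs ?_
        exact Summable.of_nonneg_of_le (fun i => abs_nonneg _) hbound hsbound
      -- representation of v - u (n M)
      have hrx := hrep x hxH hxT M
      have hry := hrep y hyH hyT M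
      -- main estimate
      have hA := hE1' k x hxE1 y hyE1 hd1 hd2
      have hGx : G k x = g' k x + ∑' i, g (M + i) k x := by
        rw [hGdef]
        simp only
        rw [hΔdef]
        simp only
        rw [ENNReal.toReal_add ENNReal.ofReal_ne_top (by
          intro hc
          apply hxΔ k
          rw [hΔdef]; simp only; rw [hc]; simp)]
        rw [ENNReal.toReal_ofReal (hg'0 k x)]
        congr 1
        rw [ENNReal.tsum_toReal_eq fun i => ENNReal.ofReal_ne_top]
        exact tsum_congr fun i => ENNReal.toReal_ofReal ((hgi (M + i)).1 k x)
      have hGy : G k y = g' k y + ∑' i, g (M + i) k y := by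
        rw [hGdef]
        simp only
        rw [hΔdef]
        simp only
        rw [ENNReal.toReal_add ENNReal.ofReal_ne_top (by
          intro hc
          apply hyΔ k
          rw [hΔdef]; simp only; rw [hc]; simp)]
        rw [ENNReal.toReal_ofReal (hg'0 k y)]
        congr 1
        rw [ENNReal.tsum_toReal_eq fun i => ENNReal.ofReal_ne_top]
        exact tsum_congr fun i => ENNReal.toReal_ofReal ((hgi (M + i)).1 k y)
      have hvx : v x = u (n M) x + ∑' i, h (M + i) x := by
        have := hrx.tsum_eq; linarith [this]
      have hvy : v y = u (n M) y + ∑' i, h (M + i) y := by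
        have := hry.tsum_eq; linarith [this]
      have hsplit : (u m x - v x) - (u m y - v y) =
          ((u m x - u (n M) x) - (u m y - u (n M) y))
            - ∑' i, (h (M + i) x - h (M + i) y) := by
        rw [hvx, hvy, Summable.tsum_sub hrx.summable hry.summable]
        ring
      have htsum_bound : |∑' i, (h (M + i) x - h (M + i) y)| ≤
          dist x y ^ s * (∑' i, g (M + i) k x + ∑' i, g (M + i) k y) := by
        have h1 : |∑' i, (h (M + i) x - h (M + i) y)| ≤
            ∑' i, |h (M + i) x - h (M + i) y| := by
          simpa using norm_tsum_le_tsum_norm (f := fun i => h (M + i) x - h (M + i) y)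
            (by simpa using hsa.abs)
        refine h1.trans ?_
        have h2 : ∑' i, |h (M + i) x - h (M + i) y| ≤
            ∑' i, dist x y ^ s * (g (M + i) k x + g (M + i) k y) :=
          Summable.tsum_le_tsum hbound (Summable.of_nonneg_of_le (fun i => abs_nonneg _) hbound hsbound) hsbound
        refine h2.trans_eq ?_
        rw [tsum_mul_left, Summable.tsum_add hsgx hsgy]
      calc |(u m x - v x) - (u m y - v y)|
          ≤ |(u m x - u (n M) x) - (u m y - u (n M) y)|
            + |∑' i, (h (M + i) x - h (M + i) y)| := by
            rw [hsplit]; exact abs_sub _ _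
        _ ≤ dist x y ^ s * (g' k x + g' k y)
            + dist x y ^ s * (∑' i, g (M + i) k x + ∑' i, g (M + i) k y) :=
            add_le_add hA htsum_bound
        _ = dist x y ^ s * (G k x + G k y) := by
            rw [hGx, hGy]; ring
    · -- lqLpNorm bound
      rw [lqLpNorm_eq_Qn hp0 G (fun k x => ENNReal.toReal_nonneg)]
      refine le_trans (Qn_mono_ae fun k => Filter.Eventually.of_forall fun x => ?_) hQΔ
      exact ENNReal.ofReal_toReal_le
  -- Besov norm bound for approximants
  have hbesov_le : ∀ (M : ℕ) (m : ℕ), n M ≤ m →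
      besovNorm μ s p q (fun x => u m x - v x) ≤ B M + B M := by
    intro M m hm
    obtain ⟨h1, G, hG, h2⟩ := key M m hm
    unfold besovNorm
    refine add_le_add h1 ?_
    refine le_trans ?_ h2
    exact le_trans (iInf_le _ G) (iInf_le _ hG)
  -- B tends to zero
  have hBtend : Filter.Tendsto (fun M => B M + B M) Filter.atTop (nhds 0) := by
    have h1 : Filter.Tendsto (fun M : ℕ => tg ^ M) Filter.atTop (nhds 0) :=
      ENNReal.tendsto_pow_atTop_nhds_zero_of_lt_one htglt
    have h2 : Filter.Tendsto (fun M : ℕ => tg ^ M * (1 + S)) Filter.atTop (nhds 0) := by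
      have := ENNReal.Tendsto.mul_const h1 (Or.inr h1Sne)
      simpa using this
    have h3 : Filter.Tendsto B Filter.atTop (nhds 0) := by
      rw [hBdef]
      have h4 := (ENNReal.continuous_rpow_const (y := 1/ρ)).tendsto 0
      have h5 := h4.comp h2
      rw [show ((0:ENNReal) ^ (1/ρ)) = 0 from ENNReal.zero_rpow_of_pos (by positivity) ] at h5
      exact h5
    simpa using h3.add h3
  refine ⟨v, hvmeas, ?_, ?_⟩
  · -- finiteness of the Besov norm of v
    have h0 := key 0 (n 0) le_rfl
    obtain ⟨hLp0, G0, hG0, hQ0⟩ := h0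
    have hfin0 : besovNorm μ s p q (u (n 0)) < ⊤ := hufin (n 0)
    have hlt : besovNorm μ s p q (u (n 0)) < besovNorm μ s p q (u (n 0)) + 1 :=
      ENNReal.lt_add_right hfin0.ne one_ne_zero
    have hLpu := (hextract _ _ hlt).1
    obtain ⟨g0, hg0, hg0lt⟩ := (hextract _ _ hlt).2
    have hLpufin : eLpNorm (u (n 0)) p μ ≠ ⊤ :=
      (hLpu.trans_le le_top).ne
    -- Lp part of v
    have hLpv : eLpNorm v p μ ≠ ⊤ := by
      rw [eLpNorm_eq_eN hp0]
      have hpt : ∀ x, ENNReal.ofReal |v x| ≤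
          ENNReal.ofReal |u (n 0) x| + ENNReal.ofReal |u (n 0) x - v x| := by
        intro x
        rw [← ENNReal.ofReal_add (abs_nonneg _) (abs_nonneg _)]
        refine ENNReal.ofReal_le_ofReal ?_
        have habs2 := abs_sub (u (n 0) x) (u (n 0) x - v x)
        have he : u (n 0) x - (u (n 0) x - v x) = v x := by ring
        rwa [he] at habs2
      have hmono := eN_mono_ae (μ := μ) (t := p) (Filter.Eventually.of_forall hpt)
      have hsplit := eN_add_rpow_le (μ := μ) hp0 hρ0 hρ1 hρp
        (ENNReal.measurable_ofReal.comp (humeas (n 0)).abs)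
        (ENNReal.measurable_ofReal.comp ((humeas (n 0)).sub hvmeas).abs)
      have hchain : eN μ p (fun x => ENNReal.ofReal |v x|) ^ ρ ≤
          eN μ p (fun x => ENNReal.ofReal |u (n 0) x|) ^ ρ
            + eN μ p (fun x => ENNReal.ofReal |u (n 0) x - v x|) ^ ρ :=
        le_trans (ENNReal.rpow_le_rpow hmono hρ0.le) hsplit
      have hfin1 : eN μ p (fun x => ENNReal.ofReal |u (n 0) x|) ^ ρ ≠ ⊤ := by
        rw [← eLpNorm_eq_eN hp0]
        exact ENNReal.rpow_ne_top_of_nonneg hρ0.le hLpufin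
      have hfin2 : eN μ p (fun x => ENNReal.ofReal |u (n 0) x - v x|) ^ ρ ≠ ⊤ := by
        rw [← eLpNorm_eq_eN hp0]
        exact ENNReal.rpow_ne_top_of_nonneg hρ0.le
          ((hLp0.trans_lt (hBne 0).lt_top).ne)
      intro hc
      rw [hc, ENNReal.top_rpow_of_pos hρ0] at hchain
      exact (ENNReal.add_ne_top.mpr ⟨hfin1, hfin2⟩) (top_le_iff.mp hchain)
    -- gradient of v
    have hgv : IsFracGrad μ s v (fun k x => g0 k x + G0 k x) := by
      have := isFracGrad_sub hg0 hG0
      have he : (fun x => u (n 0) x - (u (n 0) x - v x)) = v := by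
        funext x; ring
      rwa [he] at this
    have hlqv : lqLpNorm μ p q (fun k x => g0 k x + G0 k x) ≠ ⊤ := by
      rw [lqLpNorm_eq_Qn hp0 _ (fun k x => add_nonneg (hg0.1 k x) (hG0.1 k x))]
      have hsplit : Qn μ p q (fun k x => ENNReal.ofReal (g0 k x) + ENNReal.ofReal (G0 k x)) ^ ρ
          ≤ Qn μ p q (fun k x => ENNReal.ofReal (g0 k x)) ^ ρ
            + Qn μ p q (fun k x => ENNReal.ofReal (G0 k x)) ^ ρ :=
        Qn_add_rpow_le hp0 hq0 hρ0 hρ1 hρp hρq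
          (fun k => ENNReal.measurable_ofReal.comp (hg0.2.1 k))
          (fun k => ENNReal.measurable_ofReal.comp (hG0.2.1 k))
      have heq : (fun k x => ENNReal.ofReal (g0 k x + G0 k x)) =
          fun k x => ENNReal.ofReal (g0 k x) + ENNReal.ofReal (G0 k x) := by
        funext k x
        exact ENNReal.ofReal_add (hg0.1 k x) (hG0.1 k x)
      rw [heq]
      intro hc
      rw [hc, ENNReal.top_rpow_of_pos hρ0] at hsplit
      have hfin1 : Qn μ p q (fun k x => ENNReal.ofReal (g0 k x)) ^ ρ ≠ ⊤ := by
        rw [← lqLpNorm_eq_Qn hp0 _ hg0.1]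
        exact ENNReal.rpow_ne_top_of_nonneg hρ0.le (hg0lt.trans_le le_top).ne
      have hfin2 : Qn μ p q (fun k x => ENNReal.ofReal (G0 k x)) ^ ρ ≠ ⊤ := by
        rw [← lqLpNorm_eq_Qn hp0 _ hG0.1]
        exact ENNReal.rpow_ne_top_of_nonneg hρ0.le ((hQ0.trans_lt (hBne 0).lt_top).ne)
      exact ENNReal.add_ne_top.mpr ⟨hfin1, hfin2⟩ (top_le_iff.mp hsplit)
    have : besovNorm μ s p q v ≤ eLpNorm v p μ + lqLpNorm μ p q (fun k x => g0 k x + G0 k x) := by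
      unfold besovNorm
      refine add_le_add le_rfl ?_
      exact le_trans (iInf_le _ _) (iInf_le _ hgv)
    exact lt_of_le_of_lt this (ENNReal.add_lt_top.mpr ⟨hLpv.lt_top, hlqv.lt_top⟩)
  · -- convergence
    rw [ENNReal.tendsto_nhds_zero]
    intro ε hε
    obtain ⟨M, hM⟩ := (ENNReal.tendsto_nhds_zero.mp hBtend ε hε).exists
    filter_upwards [Filter.eventually_ge_atTop (n M)] with m hm
    exact (hbesov_le M m hm).trans hM
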